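/- Let a, b, q, k be positive integers and x a real number with a ≤ kx ≤ b/(3(1+ρ/4)), and let G be an n-vertex graph with the (a, b, ρ)-expansion-property. Suppose W, W_1, …, W_q, A_1, …, A_q ⊆ V(G) satisfy: |W| ≤ (ρkx)/2; for each i, |A_i| ≥ x, |W_i| ≤ ρx/4, and A_i is disjoint from W_i and from W; and for each I ⊆ [q] with k ≤ |I| ≤ 3k, |⋃_{i∈I} A_i| ≥ |I|·x. Then there exists J ⊆ [q] with |J| ≥ q − k such that: (1) for each j ∈ J, |B¹_{G−(W∪W_j)}(A_j)| ≥ (1+ρ/4)·x; and (2) for each I ⊆ J with k ≤ |I| ≤ 3k, |⋃_{i∈I} B¹_{G−(W∪W_i)}(A_i)| ≥ (1+ρ/4)·|I|·x. -/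

import Mathlib

open Finset SimpleGraph
open scoped Classical

variable {V : Type*}

/-- Number of ordered adjacent pairs inside `S` (= sum of degrees in the induced subgraph). -/
noncomputable def degSum [Fintype V] (G : SimpleGraph V) (S : Finset V) : ℕ :=
  ((S ×ˢ S).filter fun p => G.Adj p.1 p.2).card

/-- Average degree of the subgraph of `G` induced on `S`. -/
noncomputable def avgDegOn [Fintype V] (G : SimpleGraph V) (S : Finset V) : ℝ :=
  (degSum G S : ℝ) / (S.card : ℝ)

/-- Average degree of `G`. -/
noncomputable def avgDeg [Fintype V] (G : SimpleGraph V) : ℝ :=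
  avgDegOn G Finset.univ

/-- `cruxSize α G` is the minimum order of a subgraph of `G` with average degree at least
`α · d(G)` (equivalently, of a vertex set inducing such a subgraph). -/
noncomputable def cruxSize [Fintype V] (α : ℝ) (G : SimpleGraph V) : ℕ :=
  sInf {m | ∃ S : Finset V, S.card = m ∧ α * avgDeg G ≤ avgDegOn G S}

/-- Number of edges between `S` and its complement (counted as ordered pairs from `S` out). -/
noncomputable def crossPairs [Fintype V] (G : SimpleGraph V) (S : Finset V) : ℕ :=
  ((S ×ˢ Sᶜ).filter fun p => G.Adj p.1 p.2).card

/-- External neighbourhood of `A` in the graph `G − D`. -/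
noncomputable def nbhdIn [Fintype V] (G : SimpleGraph V) (D A : Finset V) : Finset V :=
  Finset.univ.filter fun v => v ∉ D ∧ v ∉ A ∧ ∃ u ∈ A, G.Adj u v

/-- Ball of radius `r` around `A` in the graph `G − D`. -/
noncomputable def ballIn [Fintype V] (G : SimpleGraph V) (D A : Finset V) : ℕ → Finset V
  | 0 => A
  | r + 1 => ballIn G D A r ∪ nbhdIn G D (ballIn G D A r)

/-- `G` has the `(a, b, ρ)`-expansion-property. -/
def ExpansionProperty [Fintype V] (G : SimpleGraph V) (a b ρ : ℝ) : Prop :=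
  ∀ X : Finset V, a ≤ (X.card : ℝ) → (X.card : ℝ) ≤ b →
    ρ * (X.card : ℝ) ≤ ((nbhdIn G ∅ X).card : ℝ)

/-- The Komlós–Szemerédi expansion rate function. -/
noncomputable def rho (ε k x : ℝ) : ℝ :=
  if k / 5 ≤ x then ε / (Real.log (15 * x / k)) ^ 2 else 0

/-- `(ε, k)`-robust-expander. -/
def RobustExpander [Fintype V] (G : SimpleGraph V) (ε k : ℝ) : Prop :=
  ∀ X : Finset V, k / 2 ≤ (X.card : ℝ) → (X.card : ℝ) ≤ (Fintype.card V : ℝ) / 2 →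
    ∀ F : Finset (Sym2 V), ↑F ⊆ G.edgeSet →
      (F.card : ℝ) ≤ avgDeg G * rho ε k (X.card : ℝ) * (X.card : ℝ) →
      rho ε k (X.card : ℝ) * (X.card : ℝ) ≤ ((nbhdIn (G.deleteEdges ↑F) ∅ X).card : ℝ)

/-- `G` contains a subdivision of the graph `H` (on vertex set `Fin t`): there are `t` distinct
core vertices and internally vertex-disjoint paths for the edges of `H`, whose internal
vertices avoid the cores. -/
def ContainsSubdivision {t : ℕ} (H : SimpleGraph (Fin t)) (G : SimpleGraph V) : Prop :=
  ∃ c : Fin t ↪ V, ∃ p : ∀ i j : Fin t, i < j → H.Adj i j → G.Walk (c i) (c j),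
    (∀ i j (h : i < j) (ha : H.Adj i j), (p i j h ha).IsPath) ∧
    (∀ i j (h : i < j) (ha : H.Adj i j) (k : Fin t),
        c k ∈ (p i j h ha).support → k = i ∨ k = j) ∧
    (∀ i j (h : i < j) (ha : H.Adj i j) i' j' (h' : i' < j') (ha' : H.Adj i' j'),
        (i, j) ≠ (i', j') →
        Disjoint ((p i j h ha).support.toFinset \ {c i, c j})
          ((p i' j' h' ha').support.toFinset \ {c i', c j'}))

/-- `G` contains a copy of `H` as a subgraph. -/
def ContainsCopy {W₀ : Type*} (H : SimpleGraph W₀) (G : SimpleGraph V) : Prop :=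
  ∃ f : W₀ → V, Function.Injective f ∧ ∀ a b, H.Adj a b → G.Adj (f a) (f b)

/-- Clique number of `G`. -/
noncomputable def cliqueNumber [Fintype V] (G : SimpleGraph V) : ℕ :=
  sSup {n | ∃ s : Finset V, G.IsNClique n s}

/-- the one-step collective expansion lemma. -/
lemma aux_ballIn_one [Fintype V] (G : SimpleGraph V) (D A : Finset V) :
    ballIn G D A 1 = A ∪ nbhdIn G D A := rfl

lemma aux_card_ballIn_one [Fintype V] (G : SimpleGraph V) (D A : Finset V) :
    (ballIn G D A 1).card = A.card + (nbhdIn G D A).card := by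
  rw [aux_ballIn_one, Finset.card_union_of_disjoint]
  exact Finset.disjoint_left.2 fun v hv hvN =>
    (Finset.mem_filter.1 hvN).2.2.1 hv

lemma aux_nbhd_union_subset [Fintype V] (G : SimpleGraph V) (W : Finset V) {q : ℕ}
    (Wi Ai : Fin q → Finset V) (I : Finset (Fin q)) :
    nbhdIn G ∅ (I.biUnion Ai) ⊆
      W ∪ I.biUnion (fun i => Wi i ∪ nbhdIn G (W ∪ Wi i) (Ai i)) := by
  intro v hv
  simp only [nbhdIn, Finset.mem_filter, Finset.mem_univ, true_and] at hv
  obtain ⟨-, hvX, u, huX, hadj⟩ := hv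
  obtain ⟨i, hiI, huA⟩ := Finset.mem_biUnion.1 huX
  by_cases hvW : v ∈ W
  · exact Finset.mem_union_left _ hvW
  refine Finset.mem_union_right _ (Finset.mem_biUnion.2 ⟨i, hiI, ?_⟩)
  by_cases hvWi : v ∈ Wi i
  · exact Finset.mem_union_left _ hvWi
  refine Finset.mem_union_right _ ?_
  simp only [nbhdIn, Finset.mem_filter, Finset.mem_univ, true_and]
  exact ⟨Finset.notMem_union.2 ⟨hvW, hvWi⟩,
    fun hvA => hvX (Finset.mem_biUnion.2 ⟨i, hiI, hvA⟩), u, huA, hadj⟩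

lemma aux_nbhd_sdiff_subset [Fintype V] (G : SimpleGraph V) (W : Finset V) {q : ℕ}
    (Wi Ai : Fin q → Finset V) (I : Finset (Fin q)) :
    nbhdIn G ∅ (I.biUnion Ai) \ (W ∪ I.biUnion Wi) ⊆
      I.biUnion (fun i => ballIn G (W ∪ Wi i) (Ai i) 1) := by
  intro v hv
  obtain ⟨hvN, hvS⟩ := Finset.mem_sdiff.1 hv
  simp only [nbhdIn, Finset.mem_filter, Finset.mem_univ, true_and] at hvN
  obtain ⟨-, hvX, u, huX, hadj⟩ := hvN
  obtain ⟨i, hiI, huA⟩ := Finset.mem_biUnion.1 huX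
  refine Finset.mem_biUnion.2 ⟨i, hiI, ?_⟩
  rw [aux_ballIn_one]
  refine Finset.mem_union_right _ ?_
  simp only [nbhdIn, Finset.mem_filter, Finset.mem_univ, true_and]
  have hvW : v ∉ W := fun h => hvS (Finset.mem_union_left _ h)
  have hvWi : v ∉ Wi i := fun h =>
    hvS (Finset.mem_union_right _ (Finset.mem_biUnion.2 ⟨i, hiI, h⟩))
  exact ⟨Finset.notMem_union.2 ⟨hvW, hvWi⟩,
    fun hvA => hvX (Finset.mem_biUnion.2 ⟨i, hiI, hvA⟩), u, huA, hadj⟩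

set_option maxHeartbeats 1000000 in
theorem statement_4 [Fintype V] (G : SimpleGraph V) (a b q k : ℕ) (x ρ : ℝ)
    (ha : 0 < a) (hb : 0 < b) (hq : 0 < q) (hk : 0 < k) (hρ : 0 < ρ)
    (hax : (a : ℝ) ≤ (k : ℝ) * x) (hxb : (k : ℝ) * x ≤ (b : ℝ) / (3 * (1 + ρ / 4)))
    (hG : ExpansionProperty G a b ρ)
    (W : Finset V) (Wi Ai : Fin q → Finset V)
    (hW : (W.card : ℝ) ≤ ρ * (k : ℝ) * x / 2)
    (hA : ∀ i, x ≤ ((Ai i).card : ℝ))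
    (hWi : ∀ i, ((Wi i).card : ℝ) ≤ ρ * x / 4)
    (hd1 : ∀ i, Disjoint (Ai i) (Wi i)) (hd2 : ∀ i, Disjoint (Ai i) W)
    (hcoll : ∀ I : Finset (Fin q), k ≤ I.card → I.card ≤ 3 * k →
      (I.card : ℝ) * x ≤ ((I.biUnion Ai).card : ℝ)) :
    ∃ J : Finset (Fin q), q - k ≤ J.card ∧
      (∀ j ∈ J, (1 + ρ / 4) * x ≤ ((ballIn G (W ∪ Wi j) (Ai j) 1).card : ℝ)) ∧
      (∀ I ⊆ J, k ≤ I.card → I.card ≤ 3 * k →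
        (1 + ρ / 4) * (I.card : ℝ) * x
          ≤ ((I.biUnion fun i => ballIn G (W ∪ Wi i) (Ai i) 1).card : ℝ)) := by
  have hx : 0 < x := by
    have hk1 : (1 : ℝ) ≤ (k : ℝ) := by exact_mod_cast hk
    have ha1 : (1 : ℝ) ≤ (a : ℝ) := by exact_mod_cast ha
    nlinarith
  set J : Finset (Fin q) :=
    Finset.univ.filter
      (fun j => (1 + ρ / 4) * x ≤ ((ballIn G (W ∪ Wi j) (Ai j) 1).card : ℝ)) with hJ
  -- the key claim: there is no set of k simultaneously "bad" indices
  have claim : ∀ I : Finset (Fin q), I.card = k →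
      (∀ i ∈ I, ((ballIn G (W ∪ Wi i) (Ai i) 1).card : ℝ) < (1 + ρ / 4) * x) → False := by
    intro I hIk hbad
    set X := I.biUnion Ai with hX
    have hIne : I.Nonempty := Finset.card_pos.1 (hIk ▸ hk)
    have hXlb : (k : ℝ) * x ≤ (X.card : ℝ) := by
      have := hcoll I (le_of_eq hIk.symm) (by omega)
      rwa [hIk] at this
    -- each bad A_i is small, and its outside neighbourhood is small
    have hAsmall : ∀ i ∈ I, ((Ai i).card : ℝ) < (1 + ρ / 4) * x := by
      intro i hi
      have hsub : Ai i ⊆ ballIn G (W ∪ Wi i) (Ai i) 1 := by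
        rw [aux_ballIn_one]; exact Finset.subset_union_left
      have := Finset.card_le_card hsub
      calc ((Ai i).card : ℝ) ≤ _ := by exact_mod_cast this
        _ < _ := hbad i hi
    have hNsmall : ∀ i ∈ I, ((nbhdIn G (W ∪ Wi i) (Ai i)).card : ℝ) < ρ * x / 4 := by
      intro i hi
      have hb := hbad i hi
      rw [aux_card_ballIn_one] at hb
      push_cast at hb
      have := hA i
      linarith
    -- X is in the expansion range
    have hXa : (a : ℝ) ≤ (X.card : ℝ) := le_trans hax hXlb
    have hXb : (X.card : ℝ) ≤ (b : ℝ) := by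
      have h1 : (X.card : ℝ) ≤ ∑ i ∈ I, ((Ai i).card : ℝ) := by
        exact_mod_cast Finset.card_biUnion_le
      have h2 : ∑ i ∈ I, ((Ai i).card : ℝ) ≤ ∑ _i ∈ I, (1 + ρ / 4) * x :=
        Finset.sum_le_sum fun i hi => (hAsmall i hi).le
      rw [Finset.sum_const, hIk, nsmul_eq_mul] at h2
      have hc : (0:ℝ) < 3 * (1 + ρ / 4) := by nlinarith
      have hb3 : (k : ℝ) * x * (3 * (1 + ρ / 4)) ≤ (b : ℝ) := (le_div_iff₀ hc).1 hxb
      nlinarith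
    have hexp := hG X hXa hXb
    -- bound the neighbourhood of X from above
    have hsub := aux_nbhd_union_subset G W Wi Ai I
    rw [← hX] at hsub
    have hcard1 : ((nbhdIn G ∅ X).card : ℝ) ≤
        (W.card : ℝ) + ∑ i ∈ I, (((Wi i).card : ℝ) + ((nbhdIn G (W ∪ Wi i) (Ai i)).card : ℝ)) := by
      have h1 := Finset.card_le_card hsub
      have h2 := Finset.card_union_le W
        (I.biUnion (fun i => Wi i ∪ nbhdIn G (W ∪ Wi i) (Ai i)))
      have h3 := Finset.card_biUnion_le (s := I)
        (t := fun i => Wi i ∪ nbhdIn G (W ∪ Wi i) (Ai i))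
      have h4 : ∑ i ∈ I, (Wi i ∪ nbhdIn G (W ∪ Wi i) (Ai i)).card ≤
          ∑ i ∈ I, ((Wi i).card + (nbhdIn G (W ∪ Wi i) (Ai i)).card) :=
        Finset.sum_le_sum fun i _ => Finset.card_union_le _ _
      have : (nbhdIn G ∅ X).card ≤
          W.card + ∑ i ∈ I, ((Wi i).card + (nbhdIn G (W ∪ Wi i) (Ai i)).card) := by omega
      exact_mod_cast this
    have hsum1 : ∑ i ∈ I, ((Wi i).card : ℝ) ≤ (k : ℝ) * (ρ * x / 4) := by
      have := Finset.sum_le_sum (s := I) fun i _ => hWi i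
      rwa [Finset.sum_const, hIk, nsmul_eq_mul] at this
    have hsum2 : ∑ i ∈ I, ((nbhdIn G (W ∪ Wi i) (Ai i)).card : ℝ) < (k : ℝ) * (ρ * x / 4) := by
      have := Finset.sum_lt_sum_of_nonempty hIne hNsmall
      rwa [Finset.sum_const, hIk, nsmul_eq_mul] at this
    rw [Finset.sum_add_distrib] at hcard1
    have hρX : ρ * ((k : ℝ) * x) ≤ ρ * (X.card : ℝ) :=
      mul_le_mul_of_nonneg_left hXlb hρ.le
    nlinarith
  -- J misses at most k indices
  have hJcard : q - k ≤ J.card := by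
    have hsplit := Finset.card_filter_add_card_filter_not
      (s := (Finset.univ : Finset (Fin q)))
      (p := fun j => (1 + ρ / 4) * x ≤ ((ballIn G (W ∪ Wi j) (Ai j) 1).card : ℝ))
    have huniv : (Finset.univ : Finset (Fin q)).card = q := by simp
    have hbadle : (Finset.univ.filter
        (fun j => ¬ ((1 + ρ / 4) * x ≤ ((ballIn G (W ∪ Wi j) (Ai j) 1).card : ℝ)))).card ≤ k := by
      by_contra hgt
      push_neg at hgt
      obtain ⟨I, hIsub, hIcard⟩ := Finset.exists_subset_card_eq (le_of_lt hgt)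
      exact claim I hIcard fun i hi => by
        have := hIsub hi
        simp only [Finset.mem_filter] at this
        exact this.2
    rw [hJ]; omega
  refine ⟨J, hJcard, ?_, ?_⟩
  · intro j hj
    exact (Finset.mem_filter.1 hj).2
  · intro I hIJ hIk hI3k
    set X := I.biUnion Ai with hX
    set BU := I.biUnion (fun i => ballIn G (W ∪ Wi i) (Ai i) 1) with hBU
    have hXsubBU : X ⊆ BU := by
      intro v hv
      obtain ⟨i, hi, hvA⟩ := Finset.mem_biUnion.1 hv
      exact Finset.mem_biUnion.2 ⟨i, hi, by
        rw [aux_ballIn_one]; exact Finset.mem_union_left _ hvA⟩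
    have hXlb : (I.card : ℝ) * x ≤ (X.card : ℝ) := hcoll I hIk hI3k
    by_cases hcase : (1 + ρ / 4) * (I.card : ℝ) * x ≤ (X.card : ℝ)
    · calc (1 + ρ / 4) * (I.card : ℝ) * x ≤ (X.card : ℝ) := hcase
        _ ≤ (BU.card : ℝ) := by exact_mod_cast Finset.card_le_card hXsubBU
    push_neg at hcase
    have hkI : (k : ℝ) ≤ (I.card : ℝ) := by exact_mod_cast hIk
    have hI3k' : (I.card : ℝ) ≤ 3 * (k : ℝ) := by exact_mod_cast hI3k
    have hXa : (a : ℝ) ≤ (X.card : ℝ) := by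
      have : (k : ℝ) * x ≤ (I.card : ℝ) * x := mul_le_mul_of_nonneg_right hkI hx.le
      linarith
    have hXb : (X.card : ℝ) ≤ (b : ℝ) := by
      have hc : (0:ℝ) < 3 * (1 + ρ / 4) := by nlinarith
      have hb3 : (k : ℝ) * x * (3 * (1 + ρ / 4)) ≤ (b : ℝ) := (le_div_iff₀ hc).1 hxb
      nlinarith [mul_le_mul_of_nonneg_right hI3k'
        (by positivity : (0:ℝ) ≤ (1 + ρ / 4) * x)]
    have hexp := hG X hXa hXb
    -- lower bound for BU
    set S := W ∪ I.biUnion Wi with hS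
    have h1 : X ∪ (nbhdIn G ∅ X \ S) ⊆ BU :=
      Finset.union_subset hXsubBU (aux_nbhd_sdiff_subset G W Wi Ai I)
    have hdisj : Disjoint X (nbhdIn G ∅ X \ S) := by
      refine Finset.disjoint_left.2 fun v hv hv' => ?_
      have := (Finset.mem_sdiff.1 hv').1
      exact (Finset.mem_filter.1 this).2.2.1 hv
    have h2 : X.card + (nbhdIn G ∅ X \ S).card ≤ BU.card := by
      rw [← Finset.card_union_of_disjoint hdisj]
      exact Finset.card_le_card h1
    have h3 : (nbhdIn G ∅ X).card ≤ (nbhdIn G ∅ X \ S).card + S.card :=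
      Finset.card_le_card_sdiff_add_card
    clear_value X BU S
    have hScard : (S.card : ℝ) ≤ (W.card : ℝ) + ∑ i ∈ I, ((Wi i).card : ℝ) := by
      have hu := Finset.card_union_le W (I.biUnion Wi)
      have hb' := Finset.card_biUnion_le (s := I) (t := Wi)
      have : S.card ≤ W.card + ∑ i ∈ I, (Wi i).card := by rw [hS]; omega
      exact_mod_cast this
    have hsumWi : ∑ i ∈ I, ((Wi i).card : ℝ) ≤ (I.card : ℝ) * (ρ * x / 4) := by
      have := Finset.sum_le_sum (s := I) fun i _ => hWi i
      rwa [Finset.sum_const, nsmul_eq_mul] at this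
    have hρX : ρ * ((I.card : ℝ) * x) ≤ ρ * (X.card : ℝ) :=
      mul_le_mul_of_nonneg_left hXlb hρ.le
    have h2' : (X.card : ℝ) + ((nbhdIn G ∅ X \ S).card : ℝ) ≤ (BU.card : ℝ) := by
      exact_mod_cast h2
    have h3' : ((nbhdIn G ∅ X).card : ℝ) ≤ ((nbhdIn G ∅ X \ S).card : ℝ) + (S.card : ℝ) := by
      exact_mod_cast h3
    clear_value J
    clear hIJ hJcard claim hJ J hG hcoll hd1 hd2 hA hWi hXsubBU h1 hdisj h2 h3 hcase hXa hXb hI3k' hI3k hIk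
    have e1 : ρ * (k : ℝ) * x ≤ ρ * (I.card : ℝ) * x := by
      have := mul_le_mul_of_nonneg_right hkI (mul_nonneg hρ.le hx.le)
      nlinarith
    linarith
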